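/- arXiv:1902.05039 — 2 statements merged into one kernel-verified Lean document; each statement's English description precedes it below -/
import Mathlib

section
/- Under the hypotheses of the preceding statement (σ a nonzero σ-finite measure on (0,∞) with ∫ min(1,τ)dσ(τ) < ∞ and σ((0,∞)) = ∞, k(t) = σ((t,∞)), Φ(λ) = ∫ (1 − e^{−λτ})dσ(τ), K(λ) = ∫_0^∞ e^{−λt}k(t)dt, η_τ probability measures with ∫ e^{−λs}dη_τ(s) = e^{−τΦ(λ)}, G_t(τ) = ∫_{[0,t]} k(t−s)dη_τ(s), and (t,τ) ↦ G_t(τ) jointly measurable), for every λ > 0 one has ∫_0^∞ e^{−λt} ( ∫_0^∞ G_t(τ) dτ ) dt = 1/λ; i.e., the double integral identity expressing that G_t(·) is a probability density in τ for almost every t. -/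
open MeasureTheory
open scoped ENNReal

open Set Real in
private lemma lint_translate {g : ℝ → ℝ≥0∞} (hg : Measurable g) (s : ℝ) :
    ∫⁻ t in Ioi s, g t = ∫⁻ u in Ioi (0:ℝ), g (u + s) := by
  have h0 : ((volume : Measure ℝ).map (· + s)) = volume := map_add_right_eq_self volume s
  have h1 : (volume : Measure ℝ).restrict (Ioi s)
      = ((volume : Measure ℝ).restrict ((· + s) ⁻¹' Ioi s)).map (· + s) := by
    conv_lhs => rw [← h0]
    exact Measure.restrict_map (measurable_add_const s) measurableSet_Ioi
  have h2 : ((· + s) ⁻¹' Ioi s : Set ℝ) = Ioi 0 := by ext x; simp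
  rw [h1, h2, lintegral_map hg (measurable_add_const s)]

open Set Real in
private lemma lint_exp_Ioi {c : ℝ} (hc : 0 < c) :
    ∫⁻ x in Ioi (0:ℝ), ENNReal.ofReal (exp (-c * x)) = ENNReal.ofReal (1 / c) := by
  rw [← ofReal_integral_eq_lintegral_ofReal (exp_neg_integrableOn_Ioi 0 hc)
      (ae_of_all _ fun x => (exp_pos _).le)]
  congr 1
  have h := integral_comp_mul_left_Ioi (fun u => exp (-u)) 0 hc
  simp only [mul_zero, neg_mul, smul_eq_mul] at h ⊢
  rw [h, integral_exp_neg_Ioi]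
  simp [one_div]

open Set Real in
private lemma lint_exp_Ioo {c τ : ℝ} (hc : 0 < c) (hτ : 0 < τ) :
    ∫⁻ x in Ioo (0:ℝ) τ, ENNReal.ofReal (exp (-c * x))
      = ENNReal.ofReal ((1 - exp (-c * τ)) / c) := by
  rw [← ofReal_integral_eq_lintegral_ofReal
      ((exp_neg_integrableOn_Ioi 0 hc).mono_set Ioo_subset_Ioi_self)
      (ae_of_all _ fun x => (exp_pos _).le)]
  congr 1
  rw [← integral_Ioc_eq_integral_Ioo, ← intervalIntegral.integral_of_le hτ.le]
  have h := intervalIntegral.integral_comp_mul_left (a := (0:ℝ)) (b := τ)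
    (fun u => exp (-u)) hc.ne'
  simp only [mul_zero, neg_mul, smul_eq_mul] at h ⊢
  rw [h, intervalIntegral.integral_comp_neg fun u => exp u]
  rw [integral_exp]
  rw [neg_zero, exp_zero]
  ring

open Set Real in
private lemma lemA (σ : Measure ℝ) [SigmaFinite σ] {lam : ℝ} (hlam : 0 < lam) :
    ENNReal.ofReal lam * ∫⁻ t in Ioi (0:ℝ), ENNReal.ofReal (exp (-lam * t)) * σ (Ioi t)
      = ∫⁻ τ in Ioi (0:ℝ), ENNReal.ofReal (1 - exp (-lam * τ)) ∂σ := by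
  set f : ℝ → ℝ≥0∞ := fun t => ENNReal.ofReal (exp (-lam * t)) with hfdef
  have hf : Measurable f := by
    apply Measurable.ennreal_ofReal
    exact (measurable_id.const_mul (-lam)).exp
  set F : ℝ × ℝ → ℝ≥0∞ :=
    fun p => ({q : ℝ × ℝ | q.1 < q.2}).indicator (fun q => f q.1) p with hFdef
  have hF : Measurable F :=
    (hf.comp measurable_fst).indicator (measurableSet_lt measurable_fst measurable_snd)
  have step1 : ∫⁻ t in Ioi (0:ℝ), f t * σ (Ioi t)
      = ∫⁻ t in Ioi (0:ℝ), ∫⁻ τ in Ioi (0:ℝ), F (t, τ) ∂σ := by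
    refine setLIntegral_congr_fun measurableSet_Ioi (fun t ht => ?_)
    have h1 : (fun τ => F (t, τ)) = (Ioi t).indicator (fun _ => f t) := by
      ext τ; simp [hFdef, indicator_apply, mem_Ioi]
    rw [h1, lintegral_indicator measurableSet_Ioi, Measure.restrict_restrict measurableSet_Ioi,
      setLIntegral_const, inter_eq_self_of_subset_left (Ioi_subset_Ioi ht.le)]
  have step2 : ∫⁻ t in Ioi (0:ℝ), ∫⁻ τ in Ioi (0:ℝ), F (t, τ) ∂σ
      = ∫⁻ τ in Ioi (0:ℝ), ∫⁻ t in Ioi (0:ℝ), F (t, τ) ∂(volume) ∂σ :=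
    lintegral_lintegral_swap hF.aemeasurable
  have step3 : ∫⁻ τ in Ioi (0:ℝ), ∫⁻ t in Ioi (0:ℝ), F (t, τ) ∂(volume) ∂σ
      = ∫⁻ τ in Ioi (0:ℝ), ENNReal.ofReal ((1 - exp (-lam * τ)) / lam) ∂σ := by
    refine setLIntegral_congr_fun measurableSet_Ioi (fun τ hτ => ?_)
    have h1 : (fun t => F (t, τ)) = (Iio τ).indicator f := by
      ext t; simp [hFdef, indicator_apply, mem_Iio]
    rw [h1, lintegral_indicator measurableSet_Iio, Measure.restrict_restrict measurableSet_Iio,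
      show Iio τ ∩ Ioi 0 = Ioo 0 τ by rw [inter_comm, Ioi_inter_Iio],
      lint_exp_Ioo hlam hτ]
  rw [step1, step2, step3, ← lintegral_const_mul' _ _ ENNReal.ofReal_ne_top]
  refine setLIntegral_congr_fun measurableSet_Ioi (fun τ hτ => ?_)
  rw [← ENNReal.ofReal_mul hlam.le, mul_div_cancel₀ _ hlam.ne']

open Set Real in
private lemma lemC {lam : ℝ} (σ : Measure ℝ) (η : Measure ℝ) [SFinite η]
    (hsupp : η (Iio 0) = 0)
    (hKE : (∫⁻ u in Ioi (0:ℝ), ENNReal.ofReal (exp (-lam * u)) * σ (Ioi u)) ≠ ⊤) :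
    ∫⁻ t in Ioi (0:ℝ), ENNReal.ofReal (exp (-lam * t)) * ∫⁻ s in Icc (0:ℝ) t, σ (Ioi (t - s)) ∂η
      = (∫⁻ u in Ioi (0:ℝ), ENNReal.ofReal (exp (-lam * u)) * σ (Ioi u))
        * ∫⁻ s in Ici (0:ℝ), ENNReal.ofReal (exp (-lam * s)) ∂η := by
  set f : ℝ → ℝ≥0∞ := fun t => ENNReal.ofReal (exp (-lam * t)) with hfdef
  set k : ℝ → ℝ≥0∞ := fun u => σ (Ioi u) with hkdef
  set KE : ℝ≥0∞ := ∫⁻ u in Ioi (0:ℝ), f u * k u with hKEdef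
  have hf : Measurable f := by
    apply Measurable.ennreal_ofReal
    exact (measurable_id.const_mul (-lam)).exp
  have hk : Measurable k :=
    Antitone.measurable (fun a b hab => measure_mono (Ioi_subset_Ioi hab))
  set F : ℝ × ℝ → ℝ≥0∞ :=
    fun p => ({q : ℝ × ℝ | 0 ≤ q.2 ∧ q.2 ≤ q.1}).indicator
      (fun q => f q.1 * k (q.1 - q.2)) p with hFdef
  have hF : Measurable F := by
    apply Measurable.indicator
    · exact (hf.comp measurable_fst).mul (hk.comp (measurable_fst.sub measurable_snd))
    · exact ((measurableSet_le measurable_const measurable_snd).inter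
        (measurableSet_le measurable_snd measurable_fst))
  have hae : ∀ᵐ s ∂η, s ∈ Ici (0:ℝ) := by
    rw [ae_iff]
    have : {a : ℝ | ¬ a ∈ Ici (0:ℝ)} = Iio 0 := by ext x; simp
    rw [this]; exact hsupp
  have step1 : ∫⁻ t in Ioi (0:ℝ), f t * ∫⁻ s in Icc (0:ℝ) t, k (t - s) ∂η
      = ∫⁻ t in Ioi (0:ℝ), ∫⁻ s, F (t, s) ∂η := by
    refine lintegral_congr fun t => ?_
    rw [← lintegral_indicator measurableSet_Icc,
      ← lintegral_const_mul' _ _ ENNReal.ofReal_ne_top]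
    refine lintegral_congr fun s => ?_
    by_cases h : s ∈ Icc (0:ℝ) t
    · simp only [hFdef, indicator_apply, mem_Icc] at *
      rw [if_pos h, if_pos]; exact h
    · simp only [hFdef, indicator_apply, mem_Icc] at *
      rw [if_neg h, if_neg, mul_zero]; exact h
  have step2 : ∫⁻ t in Ioi (0:ℝ), ∫⁻ s, F (t, s) ∂η
      = ∫⁻ s, ∫⁻ t in Ioi (0:ℝ), F (t, s) ∂(volume) ∂η :=
    lintegral_lintegral_swap hF.aemeasurable
  have step4 : ∀ s : ℝ, 0 ≤ s →
      ∫⁻ t in Ioi (0:ℝ), F (t, s) ∂(volume) = f s * KE := by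
    intro s hs
    have h1 : (fun t => F (t, s)) = (Ici s).indicator (fun t => f t * k (t - s)) := by
      ext t
      simp only [hFdef, indicator_apply, mem_Ici, mem_setOf_eq, hs, true_and]
    have haeq : (Ici s ∩ Ioi 0 : Set ℝ) =ᵐ[volume] Ioi s := by
      rw [ae_eq_set]
      constructor
      · refine measure_mono_null (fun x hx => ?_) (volume_singleton (a := s))
        simp only [mem_diff, mem_inter_iff, mem_Ici, mem_Ioi, mem_singleton_iff] at *
        linarith [hx.1.1, hx.2]
      · refine measure_mono_null (fun x hx => ?_) (volume_singleton (a := s))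
        simp only [mem_diff, mem_inter_iff, mem_Ici, mem_Ioi, mem_singleton_iff] at *
        exact absurd ⟨hx.1.le, by linarith [hx.1]⟩ hx.2
    rw [h1, lintegral_indicator measurableSet_Ici, Measure.restrict_restrict measurableSet_Ici,
      Measure.restrict_congr_set haeq]
    have hg : Measurable fun t => f t * k (t - s) :=
      hf.mul (hk.comp (measurable_id.sub measurable_const))
    rw [lint_translate hg s]
    have h2 : ∀ u : ℝ, f (u + s) * k (u + s - s) = f s * (f u * k u) := by
      intro u
      rw [add_sub_cancel_right]
      have : -lam * (u + s) = -lam * u + -lam * s := by ring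
      rw [hfdef]
      simp only
      rw [this, Real.exp_add, ENNReal.ofReal_mul (exp_pos _).le]
      ring
    rw [lintegral_congr fun u => h2 u, lintegral_const_mul' _ _ ENNReal.ofReal_ne_top, hKEdef]
  have step5 : ∫⁻ s, ∫⁻ t in Ioi (0:ℝ), F (t, s) ∂(volume) ∂η = ∫⁻ s, f s * KE ∂η :=
    lintegral_congr_ae (hae.mono fun s hs => step4 s hs)
  have step6 : ∫⁻ s, f s * KE ∂η = KE * ∫⁻ s in Ici (0:ℝ), f s ∂η := by
    simp_rw [mul_comm (f _) KE]
    rw [lintegral_const_mul' _ _ hKE]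
    congr 1
    have h3 : ∫⁻ s, f s ∂η
        = ∫⁻ s in Ici (0:ℝ), f s ∂η + ∫⁻ s in (Ici (0:ℝ))ᶜ, f s ∂η :=
      (lintegral_add_compl f measurableSet_Ici).symm
    rw [h3, compl_Ici, setLIntegral_measure_zero _ _ hsupp, add_zero]
  rw [step1, step2, step5, step6]

/-- Under the hypotheses of Statement 2, together with
`σ((0,∞)) = ∞` and joint measurability of `(t,τ) ↦ G t τ`, for every `λ > 0`,
`∫_0^∞ e^{-λ t} (∫_0^∞ G t τ dτ) dt = 1/λ`,
i.e. `G t ·` is a probability density in `τ` for a.e. `t`. -/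
theorem inverse_subordinator_density_integrates_to_one
    (σ : Measure ℝ) [SigmaFinite σ] (hσ_ne : σ ≠ 0)
    (hσ_supp : σ (Set.Iic 0) = 0)
    (hσ_int : ∫⁻ τ in Set.Ioi (0 : ℝ), ENNReal.ofReal (min 1 τ) ∂σ < ⊤)
    (hσ_inf : σ (Set.Ioi 0) = ⊤)
    (Φ K : ℝ → ℝ)
    (hΦ : ∀ lam : ℝ, 0 < lam →
      Φ lam = (∫⁻ τ in Set.Ioi (0 : ℝ), ENNReal.ofReal (1 - Real.exp (-lam * τ)) ∂σ).toReal)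
    (hK : ∀ lam : ℝ, 0 < lam →
      K lam = (∫⁻ t in Set.Ioi (0 : ℝ),
        ENNReal.ofReal (Real.exp (-lam * t)) * σ (Set.Ioi t)).toReal)
    (η : ℝ → Measure ℝ)
    (hη_prob : ∀ τ : ℝ, 0 ≤ τ → IsProbabilityMeasure (η τ))
    (hη_supp : ∀ τ : ℝ, 0 ≤ τ → η τ (Set.Iio 0) = 0)
    (hη_laplace : ∀ τ : ℝ, 0 ≤ τ → ∀ lam : ℝ, 0 < lam →
      ∫⁻ s in Set.Ici (0 : ℝ), ENNReal.ofReal (Real.exp (-lam * s)) ∂(η τ)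
        = ENNReal.ofReal (Real.exp (-τ * Φ lam)))
    (G : ℝ → ℝ → ℝ≥0∞)
    (hG_def : ∀ t τ : ℝ, G t τ = ∫⁻ s in Set.Icc (0 : ℝ) t, σ (Set.Ioi (t - s)) ∂(η τ))
    (hG_meas : Measurable (Function.uncurry G))
    (lam : ℝ) (hlam : 0 < lam) :
    (∫⁻ t in Set.Ioi (0 : ℝ), ENNReal.ofReal (Real.exp (-lam * t)) *
        ∫⁻ τ in Set.Ioi (0 : ℝ), G t τ)
      = ENNReal.ofReal (1 / lam) := by
  classical
  set f : ℝ → ℝ≥0∞ := fun t => ENNReal.ofReal (Real.exp (-lam * t)) with hfdef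
  have hf : Measurable f := by
    apply Measurable.ennreal_ofReal
    exact (measurable_id.const_mul (-lam)).exp
  set PhiE : ℝ≥0∞ := ∫⁻ τ in Set.Ioi (0 : ℝ), ENNReal.ofReal (1 - Real.exp (-lam * τ)) ∂σ
    with hPhiEdef
  set KE : ℝ≥0∞ := ∫⁻ u in Set.Ioi (0 : ℝ), f u * σ (Set.Ioi u) with hKEdef
  have h_lamKE : ENNReal.ofReal lam * KE = PhiE := lemA σ hlam
  have hlam_ne : ENNReal.ofReal lam ≠ 0 := by
    simp [ENNReal.ofReal_eq_zero, not_le, hlam]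
  -- PhiE is finite
  have hPhiE_top : PhiE ≠ ⊤ := by
    have hb : ∀ᵐ τ ∂(σ.restrict (Set.Ioi (0:ℝ))),
        ENNReal.ofReal (1 - Real.exp (-lam * τ))
          ≤ ENNReal.ofReal (max 1 lam) * ENNReal.ofReal (min 1 τ) := by
      refine (ae_restrict_mem measurableSet_Ioi).mono fun τ hτ => ?_
      rw [← ENNReal.ofReal_mul (le_trans zero_le_one (le_max_left 1 lam))]
      apply ENNReal.ofReal_le_ofReal
      have hexp : 1 - Real.exp (-lam * τ) ≤ lam * τ := by
        have := Real.add_one_le_exp (-lam * τ)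
        linarith
      have hexp1 : 1 - Real.exp (-lam * τ) ≤ 1 := by
        have := Real.exp_pos (-lam * τ); linarith
      rcases le_total τ 1 with h | h
      · rw [min_eq_right (by linarith [Set.mem_Ioi.mp hτ])]
        calc 1 - Real.exp (-lam * τ) ≤ lam * τ := hexp
          _ ≤ max 1 lam * τ := by
              apply mul_le_mul_of_nonneg_right (le_max_right 1 lam)
              exact (Set.mem_Ioi.mp hτ).le
      · rw [min_eq_left h]
        calc 1 - Real.exp (-lam * τ) ≤ 1 := hexp1
          _ = 1 * 1 := (one_mul 1).symm
          _ ≤ max 1 lam * 1 := by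
              apply mul_le_mul_of_nonneg_right (le_max_left 1 lam) zero_le_one
    have hle : PhiE ≤ ENNReal.ofReal (max 1 lam)
        * ∫⁻ τ in Set.Ioi (0:ℝ), ENNReal.ofReal (min 1 τ) ∂σ := by
      rw [hPhiEdef, ← lintegral_const_mul' _ _ ENNReal.ofReal_ne_top]
      exact lintegral_mono_ae hb
    exact (lt_of_le_of_lt hle
      (ENNReal.mul_lt_top ENNReal.ofReal_lt_top hσ_int)).ne
  -- PhiE is nonzero
  have hPhiE_ne : PhiE ≠ 0 := by
    intro h0
    have hmeas : Measurable fun τ => ENNReal.ofReal (1 - Real.exp (-lam * τ)) := by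
      apply Measurable.ennreal_ofReal
      exact measurable_const.sub ((measurable_id.const_mul (-lam)).exp)
    have h1 := (lintegral_eq_zero_iff hmeas).mp h0
    have hne : σ.restrict (Set.Ioi (0:ℝ)) ≠ 0 := by
      intro h
      have : σ.restrict (Set.Ioi (0:ℝ)) Set.univ = 0 := by rw [h]; rfl
      rw [Measure.restrict_apply_univ, hσ_inf] at this
      exact ENNReal.top_ne_zero this
    haveI : (ae (σ.restrict (Set.Ioi (0:ℝ)))).NeBot := ae_neBot.mpr hne
    obtain ⟨τ, hτ0, hτmem⟩ := (h1.and (ae_restrict_mem measurableSet_Ioi)).exists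
    have hτpos : (0:ℝ) < τ := Set.mem_Ioi.mp hτmem
    have : Real.exp (-lam * τ) < 1 :=
      Real.exp_lt_one_iff.mpr (by nlinarith)
    simp only [Pi.zero_apply, ENNReal.ofReal_eq_zero] at hτ0
    linarith
  have hKE_top : KE ≠ ⊤ := by
    intro h
    rw [h, ENNReal.mul_top hlam_ne] at h_lamKE
    exact hPhiE_top h_lamKE.symm
  have hΦlam : Φ lam = PhiE.toReal := hΦ lam hlam
  have hΦpos : 0 < Φ lam := by
    rw [hΦlam]; exact ENNReal.toReal_pos hPhiE_ne hPhiE_top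
  have hPhiE_eq : PhiE = ENNReal.ofReal (Φ lam) := by
    rw [hΦlam, ENNReal.ofReal_toReal hPhiE_top]
  -- main computation
  have humeas : Measurable (Function.uncurry fun t τ => f t * G t τ) := by
    have : (Function.uncurry fun t τ => f t * G t τ)
        = fun p : ℝ × ℝ => f p.1 * Function.uncurry G p := rfl
    rw [this]
    exact (hf.comp measurable_fst).mul hG_meas
  calc
    (∫⁻ t in Set.Ioi (0 : ℝ), f t * ∫⁻ τ in Set.Ioi (0 : ℝ), G t τ)
        = ∫⁻ t in Set.Ioi (0 : ℝ), ∫⁻ τ in Set.Ioi (0 : ℝ), f t * G t τ :=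
      lintegral_congr fun t => (lintegral_const_mul' _ _ ENNReal.ofReal_ne_top).symm
    _ = ∫⁻ τ in Set.Ioi (0 : ℝ), ∫⁻ t in Set.Ioi (0 : ℝ), f t * G t τ :=
      lintegral_lintegral_swap humeas.aemeasurable
    _ = ∫⁻ τ in Set.Ioi (0 : ℝ), KE * ENNReal.ofReal (Real.exp (-τ * Φ lam)) := by
      refine setLIntegral_congr_fun measurableSet_Ioi (fun τ hτ => ?_)
      have hτ0 : (0:ℝ) ≤ τ := (Set.mem_Ioi.mp hτ).le
      haveI := hη_prob τ hτ0
      have hC : ∫⁻ t in Set.Ioi (0:ℝ), f t * ∫⁻ s in Set.Icc (0:ℝ) t, σ (Set.Ioi (t - s)) ∂(η τ)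
          = KE * ∫⁻ s in Set.Ici (0:ℝ), f s ∂(η τ) :=
        lemC σ (η τ) (hη_supp τ hτ0) hKE_top
      have hGt : ∀ t, f t * G t τ
          = f t * ∫⁻ s in Set.Icc (0:ℝ) t, σ (Set.Ioi (t - s)) ∂(η τ) :=
        fun t => by rw [hG_def]
      rw [lintegral_congr hGt, hC]
      congr 1
      exact hη_laplace τ hτ0 lam hlam
    _ = KE * ∫⁻ τ in Set.Ioi (0 : ℝ), ENNReal.ofReal (Real.exp (-(Φ lam) * τ)) := by
      rw [← lintegral_const_mul' _ _ hKE_top]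
      refine lintegral_congr fun τ => ?_
      congr 2
      ring
    _ = KE * ENNReal.ofReal (1 / Φ lam) := by rw [lint_exp_Ioi hΦpos]
    _ = ENNReal.ofReal (1 / lam) := by
      rw [← ENNReal.mul_right_inj hlam_ne ENNReal.ofReal_ne_top (a := ENNReal.ofReal lam),
        ← mul_assoc, h_lamKE, hPhiE_eq,
        ← ENNReal.ofReal_mul hΦpos.le, ← ENNReal.ofReal_mul hlam.le,
        mul_one_div, div_self hΦpos.ne', mul_one_div, div_self hlam.ne']
end

section
/- For all a > 0 and b > 0, ∫_0^∞ τ^{−1/2} e^{−a/τ − bτ} dτ = √π · e^{−2√(ab)} / √b. -/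
open MeasureTheory Set Filter

private lemma phi_hasDeriv (α β : ℝ) :
    ∀ s ∈ Ioi (0:ℝ), HasDerivWithinAt (fun s => β * s - α / s)
      (β + α / s ^ 2) (Ioi 0) s := by
  intro s hs
  have hs0 : s ≠ 0 := (mem_Ioi.mp hs).ne'
  have h2 : HasDerivAt (fun s : ℝ => β * s) (β * 1) s := (hasDerivAt_id s).const_mul β
  have h3 : HasDerivAt (fun s : ℝ => α * s⁻¹) (α * (-(s^2)⁻¹)) s :=
    (hasDerivAt_inv hs0).const_mul α
  have h1 : HasDerivAt (fun s : ℝ => β * s - α * s⁻¹) (β * 1 - α * (-(s^2)⁻¹)) s := h2.sub h3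
  have he : (fun s : ℝ => β * s - α * s⁻¹) = fun s : ℝ => β * s - α / s := by
    funext t; rw [div_eq_mul_inv]
  rw [he] at h1
  have hv : β * 1 - α * (-(s^2)⁻¹) = β + α / s ^ 2 := by field_simp; ring
  rw [hv] at h1
  exact h1.hasDerivWithinAt

private lemma phi_strictMono (α β : ℝ) (hα : 0 < α) (hβ : 0 < β) :
    StrictMonoOn (fun s => β * s - α / s) (Ioi (0:ℝ)) := by
  intro x hx y hy hxy
  have hx0 : (0:ℝ) < x := hx
  have h1 : β * x < β * y := by nlinarith
  have h2 : α / y < α / x := div_lt_div_of_pos_left hα hx0 hxy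
  simp only
  linarith

private lemma phi_image (α β : ℝ) (hα : 0 < α) (hβ : 0 < β) :
    (fun s => β * s - α / s) '' Ioi (0:ℝ) = univ := by
  set φ := fun s : ℝ => β * s - α / s with hφ
  apply Set.eq_univ_of_forall
  intro y
  have hbot : Tendsto φ (nhdsWithin 0 (Ioi 0)) atBot := by
    have h1 : Tendsto (fun s : ℝ => β * s) (nhdsWithin 0 (Ioi 0)) (nhds (β * 0)) :=
      ((continuous_const.mul continuous_id).tendsto (0:ℝ)).mono_left nhdsWithin_le_nhds
    have h2 : Tendsto (fun s : ℝ => α / s) (nhdsWithin 0 (Ioi 0)) atTop := by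
      have := tendsto_inv_nhdsGT_zero (𝕜 := ℝ) |>.const_mul_atTop hα
      simpa [div_eq_mul_inv] using this
    have h3 : Tendsto (fun s : ℝ => -(α / s)) (nhdsWithin 0 (Ioi 0)) atBot :=
      tendsto_neg_atBot_iff.mpr h2
    have := h1.add_atBot h3
    simpa [hφ, sub_eq_add_neg] using this
  have htop : Tendsto φ atTop atTop := by
    have h1 : Tendsto (fun s : ℝ => β * s) atTop atTop :=
      tendsto_id.const_mul_atTop hβ
    have h2 : Tendsto (fun s : ℝ => -(α / s)) atTop (nhds (-0)) :=
      (tendsto_const_nhds.div_atTop tendsto_id).neg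
    have := h2.add_atTop h1
    refine this.congr fun s => by ring
  obtain ⟨s₁, hs₁mem, hs₁⟩ : ∃ s₁ ∈ Ioi (0:ℝ), φ s₁ < y := by
    have := (hbot.eventually (eventually_lt_atBot y)).and self_mem_nhdsWithin
    rcases this.exists with ⟨s, h1, h2⟩
    exact ⟨s, h2, h1⟩
  obtain ⟨s₂, hs₂⟩ : ∃ s₂, y < φ s₂ ∧ s₁ ≤ s₂ := by
    have := (htop.eventually (eventually_gt_atTop y)).and (eventually_ge_atTop s₁)
    exact this.exists
  have hcont : ContinuousOn φ (Icc s₁ s₂) := by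
    apply ContinuousOn.sub (continuous_const.mul continuous_id).continuousOn
    apply ContinuousOn.div continuousOn_const continuousOn_id
    intro x hx
    have : (0:ℝ) < x := lt_of_lt_of_le hs₁mem hx.1
    exact this.ne'
  have hsub : Icc (φ s₁) (φ s₂) ⊆ φ '' Icc s₁ s₂ := intermediate_value_Icc hs₂.2 hcont
  have hy : y ∈ Icc (φ s₁) (φ s₂) := ⟨hs₁.le, hs₂.1.le⟩
  obtain ⟨x, hx, hxy⟩ := hsub hy
  exact ⟨x, lt_of_lt_of_le hs₁mem hx.1, hxy⟩

/-- The Glasser-type integral: `∫ s in Ioi 0, exp (-(β s - α/s)^2) = √π / (2β)`. -/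
private lemma glasser (α β : ℝ) (hα : 0 < α) (hβ : 0 < β) :
    (∫ s in Ioi (0:ℝ), Real.exp (-(β * s - α / s) ^ 2))
      = Real.sqrt Real.pi / (2 * β) := by
  set φ := fun s : ℝ => β * s - α / s with hφ
  set g := fun s : ℝ => Real.exp (-(φ s) ^ 2) with hg
  have hinj : InjOn φ (Ioi 0) := (phi_strictMono α β hα hβ).injOn
  have hderiv := phi_hasDeriv α β
  -- substitution u = φ s  gives  ∫ (β + α/s²) g = √π
  have hmain : (∫ s in Ioi (0:ℝ), |β + α / s ^ 2| * g s) = Real.sqrt Real.pi := by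
    have h := integral_image_eq_integral_abs_deriv_smul measurableSet_Ioi hderiv hinj
      (fun u => Real.exp (-u ^ 2))
    rw [phi_image α β hα hβ] at h
    have hgauss : (∫ u : ℝ, Real.exp (-u ^ 2)) = Real.sqrt Real.pi := by
      have := integral_gaussian 1
      simpa using this
    rw [setIntegral_univ] at h
    rw [← hgauss, h]
    simp [smul_eq_mul]
    rfl
  have hImain : IntegrableOn (fun s => |β + α / s ^ 2| * g s) (Ioi 0) := by
    have h := (integrableOn_image_iff_integrableOn_abs_deriv_smul measurableSet_Ioi hderiv hinj
      (fun u => Real.exp (-u ^ 2))).mp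
    rw [phi_image α β hα hβ] at h
    have : IntegrableOn (fun u : ℝ => Real.exp (-u ^ 2)) univ := by
      rw [integrableOn_univ]
      have := integrable_exp_neg_mul_sq (b := 1) one_pos
      simpa using this
    simpa [smul_eq_mul] using h this
  -- remove the absolute value
  have habs : ∀ s ∈ Ioi (0:ℝ), |β + α / s ^ 2| * g s = (β + α / s ^ 2) * g s := by
    intro s hs
    have : (0:ℝ) < β + α / s ^ 2 := by positivity
    rw [abs_of_pos this]
  have hmain' : (∫ s in Ioi (0:ℝ), (β + α / s ^ 2) * g s) = Real.sqrt Real.pi := by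
    rw [← hmain]
    exact (setIntegral_congr_fun measurableSet_Ioi habs).symm
  have hImain' : IntegrableOn (fun s => (β + α / s ^ 2) * g s) (Ioi 0) :=
    hImain.congr_fun habs measurableSet_Ioi
  -- integrability of g
  have hgmeas : AEStronglyMeasurable g (volume.restrict (Ioi 0)) := by
    apply ContinuousOn.aestronglyMeasurable _ measurableSet_Ioi
    apply Real.continuous_exp.comp_continuousOn
    apply ContinuousOn.neg
    apply ContinuousOn.pow
    apply ContinuousOn.sub (continuous_const.mul continuous_id).continuousOn
    exact ContinuousOn.div continuousOn_const continuousOn_id fun x hx => (mem_Ioi.mp hx).ne'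
  have hIg : IntegrableOn g (Ioi 0) := by
    have hbound : IntegrableOn (fun s : ℝ => Real.exp (2 * α * β) * Real.exp (-β^2 * s ^ 2))
        (Ioi 0) := (((integrable_exp_neg_mul_sq (by positivity : (0:ℝ) < β^2)).const_mul
          (Real.exp (2 * α * β)))).integrableOn
    apply hbound.integrable.mono' hgmeas
    filter_upwards [ae_restrict_mem measurableSet_Ioi] with s hs
    have hs0 : s ≠ 0 := (mem_Ioi.mp hs).ne'
    rw [Real.norm_eq_abs, abs_of_pos (Real.exp_pos _), ← Real.exp_add]
    apply Real.exp_le_exp.mpr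
    have hexp : (φ s) ^ 2 = β^2 * s^2 - 2 * α * β + α^2 / s^2 := by
      simp only [hφ]; field_simp; ring
    have h0 : (0:ℝ) ≤ α^2 / s^2 := by positivity
    have : -φ s ^ 2 = -(β ^ 2 * s ^ 2 - 2 * α * β + α ^ 2 / s ^ 2) := by rw [hexp]
    rw [this]
    linarith
  -- reflection: ∫ (α/s²) g = β ∫ g
  have hrefl : (∫ s in Ioi (0:ℝ), (α / s ^ 2) * g s) = β * ∫ s in Ioi (0:ℝ), g s := by
    set f := fun t : ℝ => α / (β * t) with hf
    have hfderiv : ∀ t ∈ Ioi (0:ℝ), HasDerivWithinAt f (-(α / β) / t ^ 2) (Ioi 0) t := by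
      intro t ht
      have ht0 : t ≠ 0 := (mem_Ioi.mp ht).ne'
      have h3 : HasDerivAt (fun t : ℝ => (α / β) * t⁻¹) ((α / β) * (-(t^2)⁻¹)) t :=
        (hasDerivAt_inv ht0).const_mul (α / β)
      have he : (fun t : ℝ => (α / β) * t⁻¹) = f := by
        funext u; rw [hf]; by_cases hu : u = 0 <;> field_simp [hu]
      rw [he] at h3
      have hv : (α / β) * (-(t^2)⁻¹) = -(α / β) / t ^ 2 := by field_simp
      rw [hv] at h3
      exact h3.hasDerivWithinAt
    have hfinj : InjOn f (Ioi 0) := by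
      intro x hx y hy hxy
      have hx0 : (0:ℝ) < β * x := mul_pos hβ hx
      have hy0 : (0:ℝ) < β * y := mul_pos hβ hy
      rw [hf] at hxy
      rw [div_eq_div_iff hx0.ne' hy0.ne'] at hxy
      have h1 : β * y = β * x := mul_left_cancel₀ hα.ne' hxy
      exact (mul_left_cancel₀ hβ.ne' h1).symm
    have hfimg : f '' Ioi 0 = Ioi (0:ℝ) := by
      ext y
      constructor
      · rintro ⟨t, ht, rfl⟩
        exact div_pos hα (mul_pos hβ ht)
      · intro hy
        refine ⟨α / (β * y), div_pos hα (mul_pos hβ hy), ?_⟩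
        rw [hf]
        field_simp

    have h := integral_image_eq_integral_abs_deriv_smul measurableSet_Ioi hfderiv hfinj g
    rw [hfimg] at h
    have hgf : ∀ t ∈ Ioi (0:ℝ), |(-(α / β) / t ^ 2)| • g (f t) = (1 / β) * ((α / t ^ 2) * g t) := by
      intro t ht
      have ht0 : (0:ℝ) < t := ht
      have harg : β * (α / (β * t)) - α / (α / (β * t)) = -(β * t - α / t) := by
        have ht0 : t ≠ 0 := ht0.ne'
        field_simp
        ring
      have : g (f t) = g t := by
        simp only [hg, hφ, hf]
        rw [harg, neg_sq]
      rw [this, smul_eq_mul, abs_div, abs_neg, abs_of_pos (div_pos hα hβ),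
        abs_of_pos (by positivity : (0:ℝ) < t ^ 2)]
      field_simp
    rw [setIntegral_congr_fun measurableSet_Ioi hgf] at h
    rw [integral_const_mul] at h
    have hβ0 : (1:ℝ) / β ≠ 0 := by positivity
    field_simp at h ⊢
    linarith [h]
  -- integrability of (α/s²) g
  have hIg2 : IntegrableOn (fun s => (α / s ^ 2) * g s) (Ioi 0) := by
    have h : IntegrableOn (fun s => (β + α / s ^ 2) * g s - β * g s) (Ioi 0) :=
      hImain'.sub (hIg.const_mul β)
    apply h.congr_fun _ measurableSet_Ioi
    intro s hs
    simp only
    ring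
  -- combine
  have hsplit : (∫ s in Ioi (0:ℝ), (β + α / s ^ 2) * g s)
      = (∫ s in Ioi (0:ℝ), β * g s) + ∫ s in Ioi (0:ℝ), (α / s ^ 2) * g s := by
    rw [← integral_add (hIg.const_mul β) hIg2]
    congr 1
    funext s
    ring
  rw [hsplit, integral_const_mul, hrefl] at hmain'
  have hJ : (2 * β) * (∫ s in Ioi (0:ℝ), g s) = Real.sqrt Real.pi := by linarith
  field_simp
  linarith

/-- For all `a, b > 0`,
`∫_0^∞ τ^{-1/2} e^{-a/τ - bτ} dτ = √π e^{-2√(ab)} / √b`. -/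
theorem integral_rpow_neg_half_exp
    (a b : ℝ) (ha : 0 < a) (hb : 0 < b) :
    (∫ τ in Set.Ioi (0 : ℝ), τ ^ (-(1 : ℝ) / 2) * Real.exp (-a / τ - b * τ))
      = Real.sqrt Real.pi * Real.exp (-2 * Real.sqrt (a * b)) / Real.sqrt b := by
  set α := Real.sqrt a with hα
  set β := Real.sqrt b with hβ
  have hα0 : 0 < α := Real.sqrt_pos.mpr ha
  have hβ0 : 0 < β := Real.sqrt_pos.mpr hb
  have hαsq : α ^ 2 = a := Real.sq_sqrt ha.le
  have hβsq : β ^ 2 = b := Real.sq_sqrt hb.le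
  set g := fun τ : ℝ => τ ^ (-(1 : ℝ) / 2) * Real.exp (-a / τ - b * τ) with hgdef
  have hsub := integral_comp_rpow_Ioi g (p := 2) two_ne_zero
  rw [← hsub]
  have hcongr : ∀ x ∈ Ioi (0:ℝ), (|(2:ℝ)| * x ^ ((2:ℝ) - 1)) • g (x ^ (2:ℝ))
      = (2 * Real.exp (-(2 * Real.sqrt (a * b)))) * Real.exp (-(β * x - α / x) ^ 2) := by
    intro x hx
    have hx0 : (0:ℝ) < x := hx
    have hx2 : x ^ (2:ℝ) = x ^ 2 := by
      rw [← Real.rpow_natCast x 2]; norm_num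
    have hpow : (x ^ (2:ℝ)) ^ (-(1:ℝ) / 2) = x⁻¹ := by
      rw [← Real.rpow_mul hx0.le]
      norm_num [Real.rpow_neg_one]
    have hr1 : x ^ ((2:ℝ) - 1) = x := by
      norm_num
    rw [hgdef]
    simp only [smul_eq_mul]
    rw [hpow, hr1, hx2]
    have hexp : -a / x ^ 2 - b * x ^ 2 = -(β * x - α / x) ^ 2 + -(2 * Real.sqrt (a * b)) := by
      have hab : α * β = Real.sqrt (a * b) := (Real.sqrt_mul ha.le b).symm
      have : (β * x - α / x) ^ 2 = β ^ 2 * x ^ 2 - 2 * (α * β) + α ^ 2 / x ^ 2 := by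
        field_simp
        ring
      rw [this, hab, hαsq, hβsq]
      field_simp
      ring
    rw [hexp, Real.exp_add]
    have : |(2:ℝ)| = 2 := by norm_num
    rw [this]
    field_simp
  rw [setIntegral_congr_fun measurableSet_Ioi hcongr, integral_const_mul,
    glasser α β hα0 hβ0]
  rw [show (-2 : ℝ) * Real.sqrt (a * b) = -(2 * Real.sqrt (a * b)) by ring]
  field_simp
end
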